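/- Let V be a vector space, W ⊆ V a subspace, and C a complement of W in V. Then for each j, the space K_j = {φ ∈ Hom(Λ^j V, V) : φ(w, v_1,...,v_{j-1}) ∈ W for all w ∈ W, v_i ∈ V} is linearly isomorphic to (Λ^j V* ⊗ W) ⊕ (Λ^j C* ⊗ C). -/

import Mathlib

variable {V : Type*} [AddCommGroup V] [Module ℝ V]

/-- `K j` as a submodule of the alternating maps `Λ^{j+1} V → V`: those sending
`(w, v₁, …, v_j)` with `w ∈ W` into `W`. -/
def tangentKSub (W : Submodule ℝ V) (j : ℕ) :
    Submodule ℝ (V [⋀^Fin (j + 1)]→ₗ[ℝ] V) where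
  carrier := {φ | ∀ v : Fin (j + 1) → V, v 0 ∈ W → φ v ∈ W}
  add_mem' := by
    intro a b ha hb v hv
    simpa using W.add_mem (ha v hv) (hb v hv)
  zero_mem' := by
    intro v hv
    simpa using W.zero_mem
  smul_mem' := by
    intro c a ha v hv
    simpa using W.smul_mem c (ha v hv)

section Aux

variable {M : Type*} [AddCommGroup M] [Module ℝ M]

lemma tangentK_vanish_any {n : ℕ} (W : Submodule ℝ V) (ψ : V [⋀^Fin (n + 1)]→ₗ[ℝ] M)
    (hψ : ∀ u : Fin (n + 1) → V, u 0 ∈ W → ψ u = 0)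
    (u : Fin (n + 1) → V) (i : Fin (n + 1)) (hu : u i ∈ W) : ψ u = 0 := by
  by_cases h0 : i = 0
  · exact hψ u (h0 ▸ hu)
  · have hswap := ψ.map_swap u (Ne.symm h0 : (0 : Fin (n+1)) ≠ i)
    have h1 : ψ (u ∘ Equiv.swap (0 : Fin (n+1)) i) = 0 := by
      apply hψ
      simpa [Equiv.swap_apply_left] using hu
    rw [h1] at hswap
    exact neg_eq_zero.mp hswap.symm

/-- projecting all arguments doesn't change the value. -/
lemma tangentK_proj_eq {n : ℕ} (W C : Submodule ℝ V) (hcompl : IsCompl W C)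
    (ψ : V [⋀^Fin (n + 1)]→ₗ[ℝ] M)
    (hψ : ∀ u : Fin (n + 1) → V, u 0 ∈ W → ψ u = 0)
    (v : Fin (n + 1) → V) :
    ψ (fun i => (C.linearProjOfIsCompl W hcompl.symm (v i) : V)) = ψ v := by
  set pC := C.linearProjOfIsCompl W hcompl.symm with hpC
  have hsub : ∀ x : V, x - (pC x : V) ∈ W := by
    intro x
    have := Submodule.projection_add_projection_eq_self hcompl x
    have h2 : x - (pC x : V) = (W.linearProjOfIsCompl C hcompl x : V) := by
      rw [sub_eq_iff_eq_add, eq_comm, hpC, add_comm]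
      rw [add_comm]
      exact this
    rw [h2]; exact (W.linearProjOfIsCompl C hcompl x).2
  have key : ∀ k : ℕ, k ≤ n + 1 →
      ψ (fun i => if (i : ℕ) < k then ((pC (v i) : V)) else v i) = ψ v := by
    intro k
    induction k with
    | zero => intro _; simp
    | succ k ih =>
      intro hk
      have hk' : k < n + 1 := hk
      set i : Fin (n + 1) := ⟨k, hk'⟩ with hi
      set u : Fin (n + 1) → V := fun j => if (j : ℕ) < k then ((pC (v j) : V)) else v j with hu
      have hfun : (fun j : Fin (n+1) => if (j : ℕ) < k + 1 then ((pC (v j) : V)) else v j)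
          = Function.update u i ((pC (v i) : V)) := by
        funext jj
        rcases eq_or_ne jj i with rfl | hne
        · simp [Function.update_self, hi]
        · have hji : (jj : ℕ) ≠ k := by
            intro h; exact hne (Fin.ext h)
          have : ((jj : ℕ) < k + 1) ↔ ((jj : ℕ) < k) := by omega
          simp [Function.update_of_ne hne, hu, this]
      rw [hfun]
      have hui : u i = v i := by simp [hu, hi]
      have hsplit : ψ (Function.update u i ((pC (v i) : V)))
          = ψ (Function.update u i (v i)) - ψ (Function.update u i (v i - (pC (v i) : V))) := by
        have := ψ.toMultilinearMap.map_update_add u i (v i - (pC (v i) : V)) ((pC (v i) : V))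
        simp only [sub_add_cancel] at this
        rw [eq_sub_iff_add_eq, add_comm]
        exact this.symm
      have hzero : ψ (Function.update u i (v i - (pC (v i) : V))) = 0 := by
        apply tangentK_vanish_any W ψ hψ _ i
        simp [Function.update_self, hsub (v i)]
      rw [hsplit, hzero, sub_zero]
      have : Function.update u i (v i) = u := by
        rw [← hui]; exact Function.update_eq_self i u
      rw [this]
      exact ih (le_of_lt hk')
  have hall : (fun i => ((pC (v i) : V))) =
      (fun i : Fin (n+1) => if (i : ℕ) < n + 1 then ((pC (v i) : V)) else v i) := by
    funext i; simp [i.isLt]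
  rw [hall]
  exact key (n + 1) le_rfl

end Aux

/-- if `C` is a complement of `W` in `V`, then `K_j` is linearly isomorphic to
`(Λ^j V* ⊗ W) ⊕ (Λ^j C* ⊗ C)`, the latter encoded as alternating maps `Λ^j V → W` and
`Λ^j C → C`. -/
theorem tangentK_equiv_prod
    (W C : Submodule ℝ V) (hcompl : IsCompl W C) (j : ℕ) :
    Nonempty ((tangentKSub W j) ≃ₗ[ℝ]
      (V [⋀^Fin (j + 1)]→ₗ[ℝ] W) × (C [⋀^Fin (j + 1)]→ₗ[ℝ] C)) := by
  classical
  set pW := W.linearProjOfIsCompl C hcompl with hpW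
  set pC := C.linearProjOfIsCompl W hcompl.symm with hpC
  -- forward map
  let f : (tangentKSub W j) →ₗ[ℝ]
      (V [⋀^Fin (j + 1)]→ₗ[ℝ] W) × (C [⋀^Fin (j + 1)]→ₗ[ℝ] C) :=
    { toFun := fun φ =>
        (pW.compAlternatingMap (φ : V [⋀^Fin (j + 1)]→ₗ[ℝ] V),
         (pC.compAlternatingMap (φ : V [⋀^Fin (j + 1)]→ₗ[ℝ] V)).compLinearMap C.subtype)
      map_add' := by
        intro a b
        refine Prod.ext ?_ ?_ <;> ext v <;> simp
      map_smul' := by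
        intro c a
        refine Prod.ext ?_ ?_ <;> ext v <;> simp }
  -- backward map
  have hmem : ∀ (p : (V [⋀^Fin (j + 1)]→ₗ[ℝ] W) × (C [⋀^Fin (j + 1)]→ₗ[ℝ] C)),
      (W.subtype.compAlternatingMap p.1 +
        (C.subtype.compAlternatingMap p.2).compLinearMap pC) ∈ tangentKSub W j := by
    intro p v hv
    have h1 : pC (v 0) = 0 := Submodule.projectionOnto_apply_of_mem_right hcompl.symm hv
    have h2 : p.2 (fun i => pC (v i)) = 0 :=
      p.2.map_coord_zero 0 h1
    simp only [AlternatingMap.add_apply, AlternatingMap.compLinearMap_apply,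
      LinearMap.compAlternatingMap_apply, h2, map_zero, add_zero, Submodule.coe_subtype]
    exact (p.1 v).2
  let g : ((V [⋀^Fin (j + 1)]→ₗ[ℝ] W) × (C [⋀^Fin (j + 1)]→ₗ[ℝ] C)) →ₗ[ℝ]
      (tangentKSub W j) :=
    { toFun := fun p => ⟨W.subtype.compAlternatingMap p.1 +
        (C.subtype.compAlternatingMap p.2).compLinearMap pC, hmem p⟩
      map_add' := by
        intro a b
        apply Subtype.ext
        ext v
        simp
        abel
      map_smul' := by
        intro c a
        apply Subtype.ext
        ext v
        simp }
  refine ⟨LinearEquiv.ofLinear f g ?_ ?_⟩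
  · -- f ∘ g = id
    apply LinearMap.ext
    intro p
    refine Prod.ext ?_ ?_
    · ext v
      have h1 : ∀ x : W, pW (x : V) = x := fun x =>
        Submodule.linearProjOfIsCompl_apply_left hcompl x
      have h2 : ∀ x : C, pW (x : V) = 0 := fun x =>
        Submodule.projectionOnto_apply_of_mem_right hcompl x.2
      simp [f, g, h1, h2]
    · ext c
      have h1 : ∀ x : W, pC (x : V) = 0 := fun x =>
        Submodule.projectionOnto_apply_of_mem_right hcompl.symm x.2
      have h2 : ∀ x : C, pC (x : V) = x := fun x =>
        Submodule.linearProjOfIsCompl_apply_left hcompl.symm x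
      simp [f, g, h1, h2]
  · -- g ∘ f = id
    apply LinearMap.ext
    intro φ
    apply Subtype.ext
    ext v
    have hψ : ∀ u : Fin (j + 1) → V, u 0 ∈ W → (pC.compAlternatingMap (φ : V [⋀^Fin (j + 1)]→ₗ[ℝ] V)) u = 0 := by
      intro u hu
      have : (φ : V [⋀^Fin (j + 1)]→ₗ[ℝ] V) u ∈ W := φ.2 u hu
      simp only [LinearMap.compAlternatingMap_apply]
      exact Submodule.projectionOnto_apply_of_mem_right hcompl.symm this
    have hkey := tangentK_proj_eq W C hcompl
      (pC.compAlternatingMap (φ : V [⋀^Fin (j + 1)]→ₗ[ℝ] V)) hψ v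
    have hsum := Submodule.projection_add_projection_eq_self hcompl
      ((φ : V [⋀^Fin (j + 1)]→ₗ[ℝ] V) v)
    simp only [LinearMap.compAlternatingMap_apply] at hkey
    simp [f, g]
    rw [show ((pC ((φ : V [⋀^Fin (j + 1)]→ₗ[ℝ] V) (fun i => (pC (v i) : V)))) : V)
        = (pC ((φ : V [⋀^Fin (j + 1)]→ₗ[ℝ] V) v) : V) from congrArg _ hkey]
    exact hsum
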